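/- Let ℓ be a prime and m ≥ 0, n ≥ 1 integers. In GSp₄(ℚ_ℓ) one has the double coset decomposition K^{(1)}_{m,n} · diag(ℓ⁴, ℓ², ℓ², 1) · K^{(1)}_{m,n} = ⋃ M(x,y,z) · K^{(1)}_{m,n}, where M(x,y,z) has rows (ℓ⁴, ℓ²x, ℓ²y, z), (0, ℓ², 0, y), (0, 0, ℓ², −x), (0, 0, 0, 1) and the union is over 0 ≤ x, y < ℓ² and 0 ≤ z < ℓ⁴; the ℓ⁸ listed left cosets are pairwise distinct. -/

import Mathlib

open Pointwise

noncomputable section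

/-- The standard skew-symmetric matrix `J` defining `GSp₄`. -/
def Jmat (p : ℕ) [Fact p.Prime] : Matrix (Fin 4) (Fin 4) ℚ_[p] :=
  !![0, 0, 0, 1; 0, 0, 1, 0; 0, -1, 0, 0; -1, 0, 0, 0]

/-- The subgroup `K^{(1)}_{m,n}` of `GSp₄(ℤ_ℓ)`: integral symplectic similitudes with
multiplier `μ ≡ 1 (mod ℓ^m)` and entries at positions (2,1), (3,1), (4,1), (4,2), (4,3)
divisible by `ℓⁿ`, viewed inside the 4×4 matrices over `ℚ_ℓ`. -/
def Kmn1 (p : ℕ) [Fact p.Prime] (m n : ℕ) : Set (Matrix (Fin 4) (Fin 4) ℚ_[p]) :=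
  {g | (∀ i j, ‖g i j‖ ≤ 1) ∧ ‖g.det‖ = 1 ∧
    (∃ μ : ℚ_[p], ‖μ‖ = 1 ∧ ‖μ - 1‖ ≤ (p : ℝ) ^ (-(m : ℤ)) ∧
      g.transpose * Jmat p * g = μ • Jmat p) ∧
    ‖g 1 0‖ ≤ (p : ℝ) ^ (-(n : ℤ)) ∧ ‖g 2 0‖ ≤ (p : ℝ) ^ (-(n : ℤ)) ∧
    ‖g 3 0‖ ≤ (p : ℝ) ^ (-(n : ℤ)) ∧ ‖g 3 1‖ ≤ (p : ℝ) ^ (-(n : ℤ)) ∧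
    ‖g 3 2‖ ≤ (p : ℝ) ^ (-(n : ℤ))}

/-- The coset representatives `M(x,y,z)` for `0 ≤ x,y < ℓ²`, `0 ≤ z < ℓ⁴`. -/
def rep7 (p : ℕ) [Fact p.Prime] :
    Fin (p ^ 2) × Fin (p ^ 2) × Fin (p ^ 4) → Matrix (Fin 4) (Fin 4) ℚ_[p] :=
  fun i => !![(p : ℚ_[p]) ^ 4, (p : ℚ_[p]) ^ 2 * ((i.1 : ℕ) : ℚ_[p]),
                (p : ℚ_[p]) ^ 2 * ((i.2.1 : ℕ) : ℚ_[p]), ((i.2.2 : ℕ) : ℚ_[p]);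
              0, (p : ℚ_[p]) ^ 2, 0, ((i.2.1 : ℕ) : ℚ_[p]);
              0, 0, (p : ℚ_[p]) ^ 2, -((i.1 : ℕ) : ℚ_[p]);
              0, 0, 0, 1]

namespace S7

variable (p : ℕ) [Fact p.Prime]

def Umat (x y z : ℚ_[p]) : Matrix (Fin 4) (Fin 4) ℚ_[p] :=
  !![1,x,y,z; 0,1,0,y; 0,0,1,-x; 0,0,0,1]

def Dd : Fin 4 → ℚ_[p] := ![(p:ℚ_[p])^4, (p:ℚ_[p])^2, (p:ℚ_[p])^2, 1]
def Di : Fin 4 → ℚ_[p] := ![((p:ℚ_[p])^4)⁻¹, ((p:ℚ_[p])^2)⁻¹, ((p:ℚ_[p])^2)⁻¹, 1]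
def Dmat : Matrix (Fin 4) (Fin 4) ℚ_[p] := Matrix.diagonal (Dd p)
def Dinv : Matrix (Fin 4) (Fin 4) ℚ_[p] := Matrix.diagonal (Di p)

lemma q_ne : (p:ℚ_[p]) ≠ 0 :=
  Nat.cast_ne_zero.mpr (Fact.out (p := p.Prime)).ne_zero

lemma hp1R : (1:ℝ) < p := by exact_mod_cast (Fact.out (p := p.Prime)).one_lt

lemma hp0R : (0:ℝ) < p := lt_trans one_pos (hp1R p)

lemma norm_q_pow (k : ℕ) : ‖((p:ℚ_[p]))^k‖ = (p:ℝ)^(-(k:ℤ)) := by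
  rw [norm_pow, Padic.norm_p, inv_pow, ← zpow_natCast, ← zpow_neg]

lemma norm_q_pow_inv (k : ℕ) : ‖(((p:ℚ_[p]))^k)⁻¹‖ = (p:ℝ)^((k:ℤ)) := by
  rw [norm_inv, norm_q_pow, ← zpow_neg, neg_neg]

variable {p}

lemma padd {a b : ℚ_[p]} {C : ℝ} (ha : ‖a‖ ≤ C) (hb : ‖b‖ ≤ C) : ‖a + b‖ ≤ C :=
  le_trans (Padic.nonarchimedean a b) (max_le ha hb)

lemma psub {a b : ℚ_[p]} {C : ℝ} (ha : ‖a‖ ≤ C) (hb : ‖b‖ ≤ C) : ‖a - b‖ ≤ C := by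
  rw [sub_eq_add_neg]; exact padd ha (by rwa [norm_neg])

lemma pmul {a b : ℚ_[p]} {C D : ℝ} (ha : ‖a‖ ≤ C) (hb : ‖b‖ ≤ D) : ‖a * b‖ ≤ C * D := by
  rw [norm_mul]
  exact mul_le_mul ha hb (norm_nonneg _) (le_trans (norm_nonneg _) ha)

lemma pmul1 {a b : ℚ_[p]} {C : ℝ} (ha : ‖a‖ ≤ C) (hb : ‖b‖ ≤ 1) : ‖a * b‖ ≤ C := by
  simpa using pmul ha hb

lemma pmul1' {a b : ℚ_[p]} {C : ℝ} (ha : ‖a‖ ≤ 1) (hb : ‖b‖ ≤ C) : ‖a * b‖ ≤ C := by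
  simpa using pmul ha hb

lemma dominant {a b : ℚ_[p]} (h : ‖b‖ < ‖a‖) : ‖a - b‖ = ‖a‖ := by
  rw [sub_eq_add_neg, Padic.add_eq_max_of_ne (by rw [norm_neg]; exact ne_of_gt h)]
  rw [norm_neg]
  exact max_eq_left (le_of_lt h)

lemma pbound {a b c d : ℤ} {x : ℝ} (hx : 0 ≤ x) (h : x ≤ (p:ℝ)^b) (hd : a + b + c ≤ d) :
    (p:ℝ)^a * x * (p:ℝ)^c ≤ (p:ℝ)^d := by
  have h0 : (0:ℝ) < p := hp0R p
  calc (p:ℝ)^a * x * (p:ℝ)^c ≤ (p:ℝ)^a * (p:ℝ)^b * (p:ℝ)^c := by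
        apply mul_le_mul_of_nonneg_right _ (le_of_lt (zpow_pos h0 c))
        exact mul_le_mul_of_nonneg_left h (le_of_lt (zpow_pos h0 a))
    _ = (p:ℝ)^(a+b+c) := by rw [← zpow_add₀ h0.ne', ← zpow_add₀ h0.ne']
    _ ≤ (p:ℝ)^d := zpow_le_zpow_right₀ (le_of_lt (hp1R p)) hd

lemma ppow_le_ppow {a b : ℤ} (h : a ≤ b) : (p:ℝ)^a ≤ (p:ℝ)^b :=
  zpow_le_zpow_right₀ (le_of_lt (hp1R p)) h

variable (p)

lemma Umat_mul (a b c a' b' c' : ℚ_[p]) :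
    Umat p a b c * Umat p a' b' c' = Umat p (a+a') (b+b') (c+c'+a*b'-b*a') := by
  ext i j
  fin_cases i <;> fin_cases j <;>
    simp [Umat, Matrix.mul_apply, Fin.sum_univ_four, Matrix.vecHead, Matrix.vecTail] <;> ring

lemma Umat_zero : Umat p 0 0 0 = 1 := by
  ext i j
  fin_cases i <;> fin_cases j <;> simp [Umat, Matrix.one_apply, Matrix.vecHead, Matrix.vecTail]

lemma Umat_det (a b c : ℚ_[p]) : (Umat p a b c).det = 1 := by
  simp [Umat, Matrix.det_succ_row_zero, Fin.sum_univ_succ]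

lemma Umat_J (a b c : ℚ_[p]) :
    (Umat p a b c).transpose * Jmat p * Umat p a b c = (1:ℚ_[p]) • Jmat p := by
  rw [one_smul]
  ext i j
  fin_cases i <;> fin_cases j <;>
    simp [Umat, Jmat, Matrix.mul_apply, Fin.sum_univ_four, Matrix.transpose_apply,
      Matrix.vecHead, Matrix.vecTail] <;> ring

lemma Dmat_J :
    (Dmat p).transpose * Jmat p * Dmat p = ((p:ℚ_[p])^4) • Jmat p := by
  ext i j
  fin_cases i <;> fin_cases j <;>
    simp [Dmat, Dd, Jmat, Matrix.mul_apply, Fin.sum_univ_four, Matrix.transpose_apply,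
      Matrix.diagonal, Matrix.vecHead, Matrix.vecTail] <;> ring

lemma Dinv_J :
    (Dinv p).transpose * Jmat p * Dinv p = (((p:ℚ_[p])^4)⁻¹) • Jmat p := by
  have hq := q_ne p
  ext i j
  fin_cases i <;> fin_cases j <;>
    simp [Dinv, Di, Jmat, Matrix.mul_apply, Fin.sum_univ_four, Matrix.transpose_apply,
      Matrix.diagonal, Matrix.vecHead, Matrix.vecTail] <;> field_simp <;> ring

lemma Dmat_Dinv : Dmat p * Dinv p = 1 := by
  have hq := q_ne p
  ext i j
  fin_cases i <;> fin_cases j <;>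
    simp [Dmat, Dinv, Dd, Di, Matrix.mul_apply, Fin.sum_univ_four, Matrix.one_apply,
      Matrix.diagonal, Matrix.vecHead, Matrix.vecTail] <;> field_simp

lemma Dinv_Dmat : Dinv p * Dmat p = 1 := by
  have hq := q_ne p
  ext i j
  fin_cases i <;> fin_cases j <;>
    simp [Dmat, Dinv, Dd, Di, Matrix.mul_apply, Fin.sum_univ_four, Matrix.one_apply,
      Matrix.diagonal, Matrix.vecHead, Matrix.vecTail] <;> field_simp

lemma sympl_mul {A B : Matrix (Fin 4) (Fin 4) ℚ_[p]} {c d : ℚ_[p]}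
    (hA : A.transpose * Jmat p * A = c • Jmat p)
    (hB : B.transpose * Jmat p * B = d • Jmat p) :
    (A * B).transpose * Jmat p * (A * B) = (c * d) • Jmat p := by
  have h1 : (A * B).transpose * Jmat p * (A * B)
      = B.transpose * (A.transpose * Jmat p * A) * B := by
    rw [Matrix.transpose_mul]
    noncomm_ring
  rw [h1, hA, Matrix.mul_smul, Matrix.smul_mul, hB, smul_smul]

-- entry extraction
lemma entry03 {k : Matrix (Fin 4) (Fin 4) ℚ_[p]} {μ : ℚ_[p]}
    (h : k.transpose * Jmat p * k = μ • Jmat p) :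
    k 0 0 * k 3 3 + k 1 0 * k 2 3 - k 2 0 * k 1 3 - k 3 0 * k 0 3 = μ := by
  have h' := congrFun (congrFun h 0) 3
  simp [Jmat, Matrix.mul_apply, Fin.sum_univ_four, Matrix.transpose_apply,
    Matrix.smul_apply, Matrix.vecHead, Matrix.vecTail, smul_eq_mul] at h'
  linear_combination h'

lemma entry13 {k : Matrix (Fin 4) (Fin 4) ℚ_[p]} {μ : ℚ_[p]}
    (h : k.transpose * Jmat p * k = μ • Jmat p) :
    k 0 1 * k 3 3 + k 1 1 * k 2 3 - k 2 1 * k 1 3 - k 3 1 * k 0 3 = 0 := by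
  have h' := congrFun (congrFun h 1) 3
  simp [Jmat, Matrix.mul_apply, Fin.sum_univ_four, Matrix.transpose_apply,
    Matrix.smul_apply, Matrix.vecHead, Matrix.vecTail, smul_eq_mul] at h'
  linear_combination h'

lemma entry23 {k : Matrix (Fin 4) (Fin 4) ℚ_[p]} {μ : ℚ_[p]}
    (h : k.transpose * Jmat p * k = μ • Jmat p) :
    k 0 2 * k 3 3 + k 1 2 * k 2 3 - k 2 2 * k 1 3 - k 3 2 * k 0 3 = 0 := by
  have h' := congrFun (congrFun h 2) 3
  simp [Jmat, Matrix.mul_apply, Fin.sum_univ_four, Matrix.transpose_apply,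
    Matrix.smul_apply, Matrix.vecHead, Matrix.vecTail, smul_eq_mul] at h'
  linear_combination h'


lemma Umul_apply0 (x y z : ℚ_[p]) (k : Matrix (Fin 4) (Fin 4) ℚ_[p]) (j : Fin 4) :
    (Umat p x y z * k) 0 j = k 0 j + x * k 1 j + y * k 2 j + z * k 3 j := by
  simp [Umat, Matrix.mul_apply, Fin.sum_univ_four, Matrix.vecHead, Matrix.vecTail]

lemma Umul_apply1 (x y z : ℚ_[p]) (k : Matrix (Fin 4) (Fin 4) ℚ_[p]) (j : Fin 4) :
    (Umat p x y z * k) 1 j = k 1 j + y * k 3 j := by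
  simp [Umat, Matrix.mul_apply, Fin.sum_univ_four, Matrix.vecHead, Matrix.vecTail]

lemma Umul_apply2 (x y z : ℚ_[p]) (k : Matrix (Fin 4) (Fin 4) ℚ_[p]) (j : Fin 4) :
    (Umat p x y z * k) 2 j = k 2 j - x * k 3 j := by
  simp [Umat, Matrix.mul_apply, Fin.sum_univ_four, Matrix.vecHead, Matrix.vecTail]
  ring

lemma Umul_apply3 (x y z : ℚ_[p]) (k : Matrix (Fin 4) (Fin 4) ℚ_[p]) (j : Fin 4) :
    (Umat p x y z * k) 3 j = k 3 j := by
  simp [Umat, Matrix.mul_apply, Fin.sum_univ_four, Matrix.vecHead, Matrix.vecTail]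

variable {p}

lemma pmul11 {a b : ℚ_[p]} (ha : ‖a‖ ≤ 1) (hb : ‖b‖ ≤ 1) : ‖a * b‖ ≤ 1 := by
  simpa using pmul ha hb

lemma mul_int {A B : Matrix (Fin 4) (Fin 4) ℚ_[p]}
    (hA : ∀ i j, ‖A i j‖ ≤ 1) (hB : ∀ i j, ‖B i j‖ ≤ 1) : ∀ i j, ‖(A * B) i j‖ ≤ 1 := by
  intro i j
  rw [Matrix.mul_apply, Fin.sum_univ_four]
  exact padd (padd (padd (pmul11 (hA i 0) (hB 0 j)) (pmul11 (hA i 1) (hB 1 j)))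
    (pmul11 (hA i 2) (hB 2 j))) (pmul11 (hA i 3) (hB 3 j))

lemma Umat_int {x y z : ℚ_[p]} (hx : ‖x‖ ≤ 1) (hy : ‖y‖ ≤ 1) (hz : ‖z‖ ≤ 1) :
    ∀ i j, ‖Umat p x y z i j‖ ≤ 1 := by
  intro i j
  fin_cases i <;> fin_cases j <;>
    simp [Umat, Matrix.vecHead, Matrix.vecTail, norm_neg] <;>
    first | assumption | norm_num


lemma norm_nat_le_one (a : ℕ) : ‖((a:ℕ):ℚ_[p])‖ ≤ 1 := by
  rw [← Int.cast_natCast]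
  exact Padic.norm_int_le_one a

lemma ppow_nonneg (a : ℤ) : (0:ℝ) ≤ (p:ℝ)^a := le_of_lt (zpow_pos (hp0R p) a)

lemma one_mem_K (m n : ℕ) : (1 : Matrix (Fin 4) (Fin 4) ℚ_[p]) ∈ Kmn1 p m n := by
  refine ⟨?_, by simp, ⟨1, by simp, by simpa using ppow_nonneg (p := p) _, by simp⟩,
    ?_, ?_, ?_, ?_, ?_⟩
  · intro i j
    by_cases hij : i = j <;> simp [Matrix.one_apply, hij]
  all_goals
    rw [show ((1 : Matrix (Fin 4) (Fin 4) ℚ_[p]) = Matrix.diagonal (fun _ => 1)) by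
      simp [Matrix.diagonal_one]]
    simp [Matrix.diagonal_apply]

lemma mul_mem_K {m n : ℕ} {g h : Matrix (Fin 4) (Fin 4) ℚ_[p]}
    (hg : g ∈ Kmn1 p m n) (hh : h ∈ Kmn1 p m n) : g * h ∈ Kmn1 p m n := by
  obtain ⟨gi, gd, ⟨μ, hμ1, hμm, hμJ⟩, g10, g20, g30, g31, g32⟩ := hg
  obtain ⟨hi, hd, ⟨ν, hν1, hνm, hνJ⟩, h10, h20, h30, h31, h32⟩ := hh
  refine ⟨mul_int gi hi, ?_, ⟨μ*ν, ?_, ?_, sympl_mul p hμJ hνJ⟩, ?_, ?_, ?_, ?_, ?_⟩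
  · rw [Matrix.det_mul, norm_mul, gd, hd, one_mul]
  · rw [norm_mul, hμ1, hν1, one_mul]
  · have e : μ*ν - 1 = μ*(ν-1) + (μ-1) := by ring
    rw [e]
    exact padd (pmul1' (le_of_eq hμ1) hνm) hμm
  · rw [Matrix.mul_apply, Fin.sum_univ_four]
    exact padd (padd (padd (pmul1 g10 (hi 0 0)) (pmul1' (gi 1 1) h10))
      (pmul1' (gi 1 2) h20)) (pmul1' (gi 1 3) h30)
  · rw [Matrix.mul_apply, Fin.sum_univ_four]
    exact padd (padd (padd (pmul1 g20 (hi 0 0)) (pmul1' (gi 2 1) h10))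
      (pmul1' (gi 2 2) h20)) (pmul1' (gi 2 3) h30)
  · rw [Matrix.mul_apply, Fin.sum_univ_four]
    exact padd (padd (padd (pmul1 g30 (hi 0 0)) (pmul1' (gi 3 1) h10))
      (pmul1' (gi 3 2) h20)) (pmul1' (gi 3 3) h30)
  · rw [Matrix.mul_apply, Fin.sum_univ_four]
    exact padd (padd (padd (pmul1 g30 (hi 0 1)) (pmul1 g31 (hi 1 1)))
      (pmul1 g32 (hi 2 1))) (pmul1' (gi 3 3) h31)
  · rw [Matrix.mul_apply, Fin.sum_univ_four]
    exact padd (padd (padd (pmul1 g30 (hi 0 2)) (pmul1 g31 (hi 1 2)))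
      (pmul1 g32 (hi 2 2))) (pmul1' (gi 3 3) h32)

lemma Umat_mem {x y z : ℚ_[p]} (m n : ℕ) (hx : ‖x‖ ≤ 1) (hy : ‖y‖ ≤ 1) (hz : ‖z‖ ≤ 1) :
    Umat p x y z ∈ Kmn1 p m n := by
  refine ⟨Umat_int hx hy hz, ?_, ⟨1, by simp, by simpa using ppow_nonneg (p := p) _, Umat_J p x y z⟩,
    ?_, ?_, ?_, ?_, ?_⟩
  · rw [Umat_det]; simp
  all_goals
    simp [Umat, Matrix.vecHead, Matrix.vecTail]
    try positivity

lemma rep7_eq (i : Fin (p^2) × Fin (p^2) × Fin (p^4)) :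
    rep7 p i = Umat p ((i.1:ℕ):ℚ_[p]) ((i.2.1:ℕ):ℚ_[p]) ((i.2.2:ℕ):ℚ_[p]) * Dmat p := by
  ext a b
  fin_cases a <;> fin_cases b <;>
    simp [rep7, Umat, Dmat, Dd, Matrix.mul_apply, Fin.sum_univ_four, Matrix.diagonal,
      Matrix.vecHead, Matrix.vecTail] <;> ring

variable (p)

lemma exists_approx (t : ℚ_[p]) (ht : ‖t‖ ≤ 1) (c : ℕ) :
    ∃ a : ℕ, a < p ^ c ∧ ‖t - ((a:ℕ):ℚ_[p])‖ ≤ (p:ℝ)^(-(c:ℤ)) := by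
  set X : ℤ_[p] := ⟨t, ht⟩ with hX
  refine ⟨X.appr c, PadicInt.appr_lt X c, ?_⟩
  have h1 := (PadicInt.norm_le_pow_iff_mem_span_pow (X - (X.appr c : ℤ_[p])) c).mpr
    (PadicInt.appr_spec c X)
  have h2 : ((X - (X.appr c : ℤ_[p]) : ℤ_[p]) : ℚ_[p]) = t - ((X.appr c : ℕ) : ℚ_[p]) := by
    push_cast
    rfl
  rwa [PadicInt.norm_def, h2] at h1

lemma sandwich_norm (V : Matrix (Fin 4) (Fin 4) ℚ_[p]) (i j : Fin 4) :
    ‖(Dinv p * V * Dmat p) i j‖ = ‖Di p i‖ * ‖V i j‖ * ‖Dd p j‖ := by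
  rw [Dinv, Dmat, Matrix.mul_diagonal, Matrix.diagonal_mul, norm_mul, norm_mul]

lemma nDi0 : ‖Di p 0‖ = (p:ℝ)^(4:ℤ) := by
  rw [show Di p 0 = ((p:ℚ_[p])^4)⁻¹ from rfl]
  simpa using norm_q_pow_inv p 4

lemma nDi1 : ‖Di p 1‖ = (p:ℝ)^(2:ℤ) := by
  rw [show Di p 1 = ((p:ℚ_[p])^2)⁻¹ from rfl]
  simpa using norm_q_pow_inv p 2

lemma nDi2 : ‖Di p 2‖ = (p:ℝ)^(2:ℤ) := by
  rw [show Di p 2 = ((p:ℚ_[p])^2)⁻¹ from rfl]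
  simpa using norm_q_pow_inv p 2

lemma nDi3 : ‖Di p 3‖ = (p:ℝ)^(0:ℤ) := by
  rw [show Di p 3 = (1:ℚ_[p]) from rfl]
  simp

lemma nDd0 : ‖Dd p 0‖ = (p:ℝ)^(-4:ℤ) := by
  rw [show Dd p 0 = ((p:ℚ_[p])^4) from rfl]
  simpa using norm_q_pow p 4

lemma nDd1 : ‖Dd p 1‖ = (p:ℝ)^(-2:ℤ) := by
  rw [show Dd p 1 = ((p:ℚ_[p])^2) from rfl]
  simpa using norm_q_pow p 2

lemma nDd2 : ‖Dd p 2‖ = (p:ℝ)^(-2:ℤ) := by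
  rw [show Dd p 2 = ((p:ℚ_[p])^2) from rfl]
  simpa using norm_q_pow p 2

lemma nDd3 : ‖Dd p 3‖ = (p:ℝ)^(0:ℤ) := by
  rw [show Dd p 3 = (1:ℚ_[p]) from rfl]
  simp

lemma exists_rep {m n : ℕ} (hn : 1 ≤ n) {k : Matrix (Fin 4) (Fin 4) ℚ_[p]}
    (hk : k ∈ Kmn1 p m n) :
    ∃ i : Fin (p ^ 2) × Fin (p ^ 2) × Fin (p ^ 4),
      ∃ g ∈ Kmn1 p m n, k * Dmat p = rep7 p i * g := by
  obtain ⟨hint, hdet, ⟨μ, hμ1, hμm, hμJ⟩, h10, h20, h30, h31, h32⟩ := hk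
  have hplt := hp1R p
  have hppos := hp0R p
  have hpn_lt1 : (p:ℝ)^(-(n:ℤ)) < 1 := by
    calc (p:ℝ)^(-(n:ℤ)) ≤ (p:ℝ)^(-(1:ℤ)) := ppow_le_ppow (by omega)
    _ < 1 := by
        rw [zpow_neg, zpow_one]
        rw [inv_lt_one_iff₀]
        right; exact hplt
  -- ‖k 3 3‖ = 1
  have hμeq := entry03 p hμJ
  have hsmall : ‖k 1 0 * k 2 3 - k 2 0 * k 1 3 - k 3 0 * k 0 3‖ < 1 :=
    lt_of_le_of_lt (psub (psub (pmul1 h10 (hint 2 3)) (pmul1 h20 (hint 1 3)))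
      (pmul1 h30 (hint 0 3))) hpn_lt1
  have hk0033 : ‖k 0 0 * k 3 3‖ = 1 := by
    have e : k 0 0 * k 3 3 = μ - (k 1 0 * k 2 3 - k 2 0 * k 1 3 - k 3 0 * k 0 3) := by
      linear_combination hμeq
    rw [e, dominant (by rw [hμ1]; exact hsmall)]
    exact hμ1
  have hk33 : ‖k 3 3‖ = 1 := by
    have h1 : ‖k 0 0‖ * ‖k 3 3‖ = 1 := by rw [← norm_mul]; exact hk0033
    have h2 := hint 3 3
    have h3 := hint 0 0
    have h4 := norm_nonneg (k 0 0)
    have h5 := norm_nonneg (k 3 3)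
    nlinarith
  have hk33ne : k 3 3 ≠ 0 := by
    intro h0; rw [h0, norm_zero] at hk33; norm_num at hk33
  -- choose x, y, z
  set xt : ℚ_[p] := -(k 2 3) / k 3 3 with hxt
  set yt : ℚ_[p] := k 1 3 / k 3 3 with hyt
  have hxt1 : ‖xt‖ ≤ 1 := by rw [hxt, norm_div, norm_neg, hk33, div_one]; exact hint 2 3
  have hyt1 : ‖yt‖ ≤ 1 := by rw [hyt, norm_div, hk33, div_one]; exact hint 1 3
  obtain ⟨xa, hxalt, hxad⟩ := exists_approx p xt hxt1 2
  obtain ⟨ya, hyalt, hyad⟩ := exists_approx p yt hyt1 2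
  set zt : ℚ_[p] := (k 0 3 - (xa:ℚ_[p]) * k 1 3 - (ya:ℚ_[p]) * k 2 3) / k 3 3 with hzt
  have hzt1 : ‖zt‖ ≤ 1 := by
    rw [hzt, norm_div, hk33, div_one]
    exact psub (psub (hint 0 3) (pmul1' (norm_nat_le_one xa) (hint 1 3)))
      (pmul1' (norm_nat_le_one ya) (hint 2 3))
  obtain ⟨za, hzalt, hzad⟩ := exists_approx p zt hzt1 4
  have hxad2 : ‖xt - ((xa:ℕ):ℚ_[p])‖ ≤ (p:ℝ)^(-2:ℤ) := by simpa using hxad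
  have hyad2 : ‖yt - ((ya:ℕ):ℚ_[p])‖ ≤ (p:ℝ)^(-2:ℤ) := by simpa using hyad
  have hzad2 : ‖zt - ((za:ℕ):ℚ_[p])‖ ≤ (p:ℝ)^(-4:ℤ) := by simpa using hzad
  -- the matrix V
  set V := Umat p (-(xa:ℚ_[p])) (-(ya:ℚ_[p])) (-(za:ℚ_[p])) * k with hV
  have hV0 : ∀ j, V 0 j
      = k 0 j - (xa:ℚ_[p]) * k 1 j - (ya:ℚ_[p]) * k 2 j - (za:ℚ_[p]) * k 3 j := by
    intro j; rw [hV, Umul_apply0]; ring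
  have hV1 : ∀ j, V 1 j = k 1 j - (ya:ℚ_[p]) * k 3 j := by
    intro j; rw [hV, Umul_apply1]; ring
  have hV2 : ∀ j, V 2 j = k 2 j + (xa:ℚ_[p]) * k 3 j := by
    intro j; rw [hV, Umul_apply2]; ring
  have hV3 : ∀ j, V 3 j = k 3 j := by
    intro j; rw [hV, Umul_apply3]
  have hVint : ∀ i j, ‖V i j‖ ≤ 1 := by
    rw [hV]
    exact mul_int (Umat_int (by rw [norm_neg]; exact norm_nat_le_one xa)
      (by rw [norm_neg]; exact norm_nat_le_one ya)
      (by rw [norm_neg]; exact norm_nat_le_one za)) hint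
  have hVint' : ∀ i j, ‖V i j‖ ≤ (p:ℝ)^(0:ℤ) := by
    intro i j; rw [zpow_zero]; exact hVint i j
  -- the five divisibility bounds
  have hV13b : ‖V 1 3‖ ≤ (p:ℝ)^(-2:ℤ) := by
    have e : V 1 3 = (yt - (ya:ℚ_[p])) * k 3 3 := by
      rw [hV1 3, hyt]; field_simp; try ring
    rw [e, norm_mul, hk33, mul_one]
    exact hyad2
  have hV23b : ‖V 2 3‖ ≤ (p:ℝ)^(-2:ℤ) := by
    have e : V 2 3 = -((xt - (xa:ℚ_[p])) * k 3 3) := by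
      rw [hV2 3, hxt]; field_simp; try ring
    rw [e, norm_neg, norm_mul, hk33, mul_one]
    exact hxad2
  have hV03b : ‖V 0 3‖ ≤ (p:ℝ)^(-4:ℤ) := by
    have e : V 0 3 = (zt - (za:ℚ_[p])) * k 3 3 := by
      rw [hV0 3, hzt]; field_simp; try ring
    rw [e, norm_mul, hk33, mul_one]
    exact hzad2
  -- symplectic identity for V
  have hVJ : V.transpose * Jmat p * V = μ • Jmat p := by
    rw [hV]
    have h := sympl_mul p (Umat_J p (-(xa:ℚ_[p])) (-(ya:ℚ_[p])) (-(za:ℚ_[p]))) hμJ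
    rwa [one_mul] at h
  have hV33 : ‖V 3 3‖ = 1 := by rw [hV3 3]; exact hk33
  have hV01b : ‖V 0 1‖ ≤ (p:ℝ)^(-2:ℤ) := by
    have e : V 0 1 * V 3 3 = V 2 1 * V 1 3 + V 3 1 * V 0 3 - V 1 1 * V 2 3 := by
      linear_combination entry13 p hVJ
    have hb : ‖V 0 1 * V 3 3‖ ≤ (p:ℝ)^(-2:ℤ) := by
      rw [e]
      refine psub (padd (pmul1' (hVint 2 1) hV13b) ?_) (pmul1' (hVint 1 1) hV23b)
      exact le_trans (pmul1' (hVint 3 1) hV03b) (ppow_le_ppow (by norm_num))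
    rwa [norm_mul, hV33, mul_one] at hb
  have hV02b : ‖V 0 2‖ ≤ (p:ℝ)^(-2:ℤ) := by
    have e : V 0 2 * V 3 3 = V 2 2 * V 1 3 + V 3 2 * V 0 3 - V 1 2 * V 2 3 := by
      linear_combination entry23 p hVJ
    have hb : ‖V 0 2 * V 3 3‖ ≤ (p:ℝ)^(-2:ℤ) := by
      rw [e]
      refine psub (padd (pmul1' (hVint 2 2) hV13b) ?_) (pmul1' (hVint 1 2) hV23b)
      exact le_trans (pmul1' (hVint 3 2) hV03b) (ppow_le_ppow (by norm_num))
    rwa [norm_mul, hV33, mul_one] at hb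
  -- congruence bounds for V
  have hV10b : ‖V 1 0‖ ≤ (p:ℝ)^(-(n:ℤ)) := by
    rw [hV1 0]
    exact psub h10 (pmul1' (norm_nat_le_one ya) h30)
  have hV20b : ‖V 2 0‖ ≤ (p:ℝ)^(-(n:ℤ)) := by
    rw [hV2 0]
    exact padd h20 (pmul1' (norm_nat_le_one xa) h30)
  have hV30b : ‖V 3 0‖ ≤ (p:ℝ)^(-(n:ℤ)) := by rw [hV3 0]; exact h30
  have hV31b : ‖V 3 1‖ ≤ (p:ℝ)^(-(n:ℤ)) := by rw [hV3 1]; exact h31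
  have hV32b : ‖V 3 2‖ ≤ (p:ℝ)^(-(n:ℤ)) := by rw [hV3 2]; exact h32
  -- the matrix g
  set g := Dinv p * V * Dmat p with hg
  have eb : ∀ (i j : Fin 4) (a b c d : ℤ), ‖Di p i‖ = (p:ℝ)^a → ‖V i j‖ ≤ (p:ℝ)^b →
      ‖Dd p j‖ = (p:ℝ)^c → a + b + c ≤ d → ‖g i j‖ ≤ (p:ℝ)^d := by
    intro i j a b c d hA hB hC hd
    rw [hg, sandwich_norm, hA, hC]
    exact pbound (norm_nonneg _) hB hd
  have eb1 : ∀ (i j : Fin 4) (a b c : ℤ), ‖Di p i‖ = (p:ℝ)^a → ‖V i j‖ ≤ (p:ℝ)^b →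
      ‖Dd p j‖ = (p:ℝ)^c → a + b + c ≤ 0 → ‖g i j‖ ≤ 1 := by
    intro i j a b c hA hB hC hd
    have h := eb i j a b c 0 hA hB hC hd
    simpa using h
  have hgmem : g ∈ Kmn1 p m n := by
    refine ⟨?_, ?_, ⟨μ, hμ1, hμm, ?_⟩, ?_, ?_, ?_, ?_, ?_⟩
    · intro i j
      fin_cases i <;> fin_cases j
      · exact eb1 0 0 4 0 (-4) (nDi0 p) (hVint' 0 0) (nDd0 p) (by norm_num)
      · exact eb1 0 1 4 (-2) (-2) (nDi0 p) hV01b (nDd1 p) (by norm_num)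
      · exact eb1 0 2 4 (-2) (-2) (nDi0 p) hV02b (nDd2 p) (by norm_num)
      · exact eb1 0 3 4 (-4) 0 (nDi0 p) hV03b (nDd3 p) (by norm_num)
      · exact eb1 1 0 2 0 (-4) (nDi1 p) (hVint' 1 0) (nDd0 p) (by norm_num)
      · exact eb1 1 1 2 0 (-2) (nDi1 p) (hVint' 1 1) (nDd1 p) (by norm_num)
      · exact eb1 1 2 2 0 (-2) (nDi1 p) (hVint' 1 2) (nDd2 p) (by norm_num)
      · exact eb1 1 3 2 (-2) 0 (nDi1 p) hV13b (nDd3 p) (by norm_num)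
      · exact eb1 2 0 2 0 (-4) (nDi2 p) (hVint' 2 0) (nDd0 p) (by norm_num)
      · exact eb1 2 1 2 0 (-2) (nDi2 p) (hVint' 2 1) (nDd1 p) (by norm_num)
      · exact eb1 2 2 2 0 (-2) (nDi2 p) (hVint' 2 2) (nDd2 p) (by norm_num)
      · exact eb1 2 3 2 (-2) 0 (nDi2 p) hV23b (nDd3 p) (by norm_num)
      · exact eb1 3 0 0 0 (-4) (nDi3 p) (hVint' 3 0) (nDd0 p) (by norm_num)
      · exact eb1 3 1 0 0 (-2) (nDi3 p) (hVint' 3 1) (nDd1 p) (by norm_num)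
      · exact eb1 3 2 0 0 (-2) (nDi3 p) (hVint' 3 2) (nDd2 p) (by norm_num)
      · exact eb1 3 3 0 0 0 (nDi3 p) (hVint' 3 3) (nDd3 p) (by norm_num)
    · -- determinant
      have hdetV : V.det = k.det := by rw [hV, Matrix.det_mul, Umat_det, one_mul]
      have hDD : (Dinv p).det * (Dmat p).det = 1 := by
        rw [← Matrix.det_mul, Dinv_Dmat, Matrix.det_one]
      have hdetg : g.det = k.det := by
        rw [hg, Matrix.det_mul, Matrix.det_mul, hdetV]
        linear_combination k.det * hDD
      rw [hdetg]; exact hdet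
    · -- symplectic
      have hgJ := sympl_mul p (sympl_mul p (Dinv_J p) hVJ) (Dmat_J p)
      rw [hg]
      rw [show (Dinv p * V * Dmat p) = (Dinv p * V) * Dmat p from rfl, hgJ]
      congr 1
      field_simp
      exact mul_div_cancel_left₀ μ (q_ne p)
    · exact eb 1 0 2 (-(n:ℤ)) (-4) (-(n:ℤ)) (nDi1 p) hV10b (nDd0 p) (by omega)
    · exact eb 2 0 2 (-(n:ℤ)) (-4) (-(n:ℤ)) (nDi2 p) hV20b (nDd0 p) (by omega)
    · exact eb 3 0 0 (-(n:ℤ)) (-4) (-(n:ℤ)) (nDi3 p) hV30b (nDd0 p) (by omega)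
    · exact eb 3 1 0 (-(n:ℤ)) (-2) (-(n:ℤ)) (nDi3 p) hV31b (nDd1 p) (by omega)
    · exact eb 3 2 0 (-(n:ℤ)) (-2) (-(n:ℤ)) (nDi3 p) hV32b (nDd2 p) (by omega)
  -- the identity k * D = rep * g
  refine ⟨(⟨xa, hxalt⟩, ⟨ya, hyalt⟩, ⟨za, hzalt⟩), g, hgmem, ?_⟩
  have hrep : rep7 p (⟨xa, hxalt⟩, ⟨ya, hyalt⟩, (⟨za, hzalt⟩ : Fin (p^4)))
      = Umat p ((xa:ℕ):ℚ_[p]) ((ya:ℕ):ℚ_[p]) ((za:ℕ):ℚ_[p]) * Dmat p := by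
    rw [rep7_eq]
  have hUU : Umat p ((xa:ℕ):ℚ_[p]) ((ya:ℕ):ℚ_[p]) ((za:ℕ):ℚ_[p]) *
      Umat p (-(xa:ℚ_[p])) (-(ya:ℚ_[p])) (-(za:ℚ_[p])) = 1 := by
    rw [Umat_mul]
    rw [show ((xa:ℚ_[p]) + -(xa:ℚ_[p])) = 0 by ring,
      show ((ya:ℚ_[p]) + -(ya:ℚ_[p])) = 0 by ring,
      show ((za:ℚ_[p]) + -(za:ℚ_[p]) + (xa:ℚ_[p]) * -(ya:ℚ_[p]) - (ya:ℚ_[p]) * -(xa:ℚ_[p])) = 0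
        by ring]
    exact Umat_zero p
  rw [hrep, hg, hV]
  have assoc : Umat p ((xa:ℕ):ℚ_[p]) ((ya:ℕ):ℚ_[p]) ((za:ℕ):ℚ_[p]) * Dmat p *
      (Dinv p * (Umat p (-(xa:ℚ_[p])) (-(ya:ℚ_[p])) (-(za:ℚ_[p])) * k) * Dmat p)
      = (Umat p ((xa:ℕ):ℚ_[p]) ((ya:ℕ):ℚ_[p]) ((za:ℕ):ℚ_[p]) * ((Dmat p * Dinv p) *
          Umat p (-(xa:ℚ_[p])) (-(ya:ℚ_[p])) (-(za:ℚ_[p])))) * k * Dmat p := by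
    noncomm_ring
  rw [assoc, Dmat_Dinv, one_mul, hUU, one_mul]

lemma Umat01 (a b c : ℚ_[p]) : Umat p a b c 0 1 = a := rfl
lemma Umat02 (a b c : ℚ_[p]) : Umat p a b c 0 2 = b := rfl
lemma Umat03 (a b c : ℚ_[p]) : Umat p a b c 0 3 = c := rfl

lemma peel {a c : ℤ} {t : ℝ} (h : (p:ℝ)^a * t * (p:ℝ)^c ≤ 1) : t ≤ (p:ℝ)^(-(a+c)) := by
  have h0 : (0:ℝ) < p := hp0R p
  have h2 := mul_le_mul_of_nonneg_left h (ppow_nonneg (p := p) (-(a+c)))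
  have e : (p:ℝ)^(-(a+c)) * ((p:ℝ)^a * t * (p:ℝ)^c) = t := by
    have e2 : (p:ℝ)^(-(a+c)) * ((p:ℝ)^a * t * (p:ℝ)^c)
        = ((p:ℝ)^(-(a+c)) * (p:ℝ)^a * (p:ℝ)^c) * t := by ring
    rw [e2, ← zpow_add₀ h0.ne', ← zpow_add₀ h0.ne',
      show (-(a+c)+a+c) = 0 from by ring, zpow_zero, one_mul]
  rw [← e]
  simpa using h2

lemma nat_eq_of {a b c : ℕ} (ha : a < p^c) (hb : b < p^c)
    (h : ‖((a:ℕ):ℚ_[p]) - ((b:ℕ):ℚ_[p])‖ ≤ (p:ℝ)^(-(c:ℤ))) : a = b := by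
  have e : ((((a:ℤ) - b) : ℤ) : ℚ_[p]) = ((a:ℕ):ℚ_[p]) - ((b:ℕ):ℚ_[p]) := by push_cast; ring
  have h2 : ‖((((a:ℤ) - b) : ℤ) : ℚ_[p])‖ ≤ (p:ℝ)^(-(c:ℤ)) := by rw [e]; exact h
  have hd := (Padic.norm_int_le_pow_iff_dvd _ _).mp h2
  have ha' : (a:ℤ) < (p:ℤ)^c := by exact_mod_cast ha
  have hb' : (b:ℤ) < (p:ℤ)^c := by exact_mod_cast hb
  have h0a : (0:ℤ) ≤ (a:ℤ) := Int.natCast_nonneg a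
  have h0b : (0:ℤ) ≤ (b:ℤ) := Int.natCast_nonneg b
  have habs : |(a:ℤ) - b| < (p:ℤ)^c := abs_sub_lt_iff.mpr ⟨by omega, by omega⟩
  have := Int.eq_zero_of_abs_lt_dvd (by exact_mod_cast hd) habs
  omega

lemma rep_inj {m n : ℕ} (i i' : Fin (p ^ 2) × Fin (p ^ 2) × Fin (p ^ 4))
    {kk : Matrix (Fin 4) (Fin 4) ℚ_[p]} (hkk : kk ∈ Kmn1 p m n)
    (h : rep7 p i' * kk = rep7 p i) : i = i' := by
  obtain ⟨⟨x, hx⟩, ⟨y, hy⟩, ⟨z, hz⟩⟩ := i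
  obtain ⟨⟨x', hx'⟩, ⟨y', hy'⟩, ⟨z', hz'⟩⟩ := i'
  obtain ⟨hint, -, -, -⟩ := hkk
  rw [rep7_eq, rep7_eq] at h
  simp only at h
  have hUU' : Umat p (-(x':ℚ_[p])) (-(y':ℚ_[p])) (-(z':ℚ_[p])) *
      Umat p ((x':ℕ):ℚ_[p]) ((y':ℕ):ℚ_[p]) ((z':ℕ):ℚ_[p]) = 1 := by
    rw [Umat_mul,
      show (-(x':ℚ_[p]) + (x':ℚ_[p])) = 0 from by ring,
      show (-(y':ℚ_[p]) + (y':ℚ_[p])) = 0 from by ring,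
      show (-(z':ℚ_[p]) + (z':ℚ_[p]) + -(x':ℚ_[p]) * (y':ℚ_[p]) -
        -(y':ℚ_[p]) * (x':ℚ_[p])) = 0 from by ring]
    exact Umat_zero p
  have hA1 : (Dinv p * Umat p (-(x':ℚ_[p])) (-(y':ℚ_[p])) (-(z':ℚ_[p]))) *
      (Umat p ((x':ℕ):ℚ_[p]) ((y':ℕ):ℚ_[p]) ((z':ℕ):ℚ_[p]) * Dmat p) = 1 := by
    have e : (Dinv p * Umat p (-(x':ℚ_[p])) (-(y':ℚ_[p])) (-(z':ℚ_[p]))) *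
        (Umat p ((x':ℕ):ℚ_[p]) ((y':ℕ):ℚ_[p]) ((z':ℕ):ℚ_[p]) * Dmat p)
        = Dinv p * ((Umat p (-(x':ℚ_[p])) (-(y':ℚ_[p])) (-(z':ℚ_[p])) *
            Umat p ((x':ℕ):ℚ_[p]) ((y':ℕ):ℚ_[p]) ((z':ℕ):ℚ_[p])) * Dmat p) := by
      noncomm_ring
    rw [e, hUU', one_mul, Dinv_Dmat]
  have hkkval : kk = (Dinv p * Umat p (-(x':ℚ_[p])) (-(y':ℚ_[p])) (-(z':ℚ_[p]))) *
      (Umat p ((x:ℕ):ℚ_[p]) ((y:ℕ):ℚ_[p]) ((z:ℕ):ℚ_[p]) * Dmat p) := by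
    calc kk = ((Dinv p * Umat p (-(x':ℚ_[p])) (-(y':ℚ_[p])) (-(z':ℚ_[p]))) *
        (Umat p ((x':ℕ):ℚ_[p]) ((y':ℕ):ℚ_[p]) ((z':ℕ):ℚ_[p]) * Dmat p)) * kk := by
          rw [hA1, one_mul]
    _ = (Dinv p * Umat p (-(x':ℚ_[p])) (-(y':ℚ_[p])) (-(z':ℚ_[p]))) *
        ((Umat p ((x':ℕ):ℚ_[p]) ((y':ℕ):ℚ_[p]) ((z':ℕ):ℚ_[p]) * Dmat p) * kk) := by
          rw [Matrix.mul_assoc]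
    _ = _ := by rw [h]
  have hkk3 : kk = Dinv p * (Umat p (-(x':ℚ_[p])) (-(y':ℚ_[p])) (-(z':ℚ_[p])) *
      Umat p ((x:ℕ):ℚ_[p]) ((y:ℕ):ℚ_[p]) ((z:ℕ):ℚ_[p])) * Dmat p := by
    rw [hkkval]; noncomm_ring
  rw [Umat_mul] at hkk3
  -- entry (0,1)
  have h01 : ‖kk 0 1‖ ≤ 1 := hint 0 1
  rw [hkk3, sandwich_norm, nDi0, nDd1, Umat01] at h01
  have hxx : ‖(-(x':ℚ_[p]) + ((x:ℕ):ℚ_[p]))‖ ≤ (p:ℝ)^(-(2:ℤ)) := by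
    have := peel (p := p) h01
    simpa using this
  have hxeq : x = x' := by
    refine nat_eq_of (p := p) hx hx' ?_
    rw [show ((x:ℕ):ℚ_[p]) - ((x':ℕ):ℚ_[p]) = -(x':ℚ_[p]) + ((x:ℕ):ℚ_[p]) from by ring]
    simpa using hxx
  have h02 : ‖kk 0 2‖ ≤ 1 := hint 0 2
  rw [hkk3, sandwich_norm, nDi0, nDd2, Umat02] at h02
  have hyy : ‖(-(y':ℚ_[p]) + ((y:ℕ):ℚ_[p]))‖ ≤ (p:ℝ)^(-(2:ℤ)) := by
    have := peel (p := p) h02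
    simpa using this
  have hyeq : y = y' := by
    refine nat_eq_of (p := p) hy hy' ?_
    rw [show ((y:ℕ):ℚ_[p]) - ((y':ℕ):ℚ_[p]) = -(y':ℚ_[p]) + ((y:ℕ):ℚ_[p]) from by ring]
    simpa using hyy
  have h03 : ‖kk 0 3‖ ≤ 1 := hint 0 3
  rw [hkk3, sandwich_norm, nDi0, nDd3, Umat03] at h03
  have hzz : ‖(-(z':ℚ_[p]) + ((z:ℕ):ℚ_[p]) + -(x':ℚ_[p]) * ((y:ℕ):ℚ_[p]) -
      -(y':ℚ_[p]) * ((x:ℕ):ℚ_[p]))‖ ≤ (p:ℝ)^(-(4:ℤ)) := by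
    have := peel (p := p) h03
    simpa using this
  have hzeq : z = z' := by
    refine nat_eq_of (p := p) hz hz' ?_
    have hcx : ((x:ℕ):ℚ_[p]) = ((x':ℕ):ℚ_[p]) := by rw [hxeq]
    have hcy : ((y:ℕ):ℚ_[p]) = ((y':ℕ):ℚ_[p]) := by rw [hyeq]
    rw [show ((z:ℕ):ℚ_[p]) - ((z':ℕ):ℚ_[p]) = -(z':ℚ_[p]) + ((z:ℕ):ℚ_[p]) +
      -(x':ℚ_[p]) * ((y:ℕ):ℚ_[p]) - -(y':ℚ_[p]) * ((x:ℕ):ℚ_[p]) from by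
        rw [hcx, hcy]; ring]
    simpa using hzz
  subst hxeq; subst hyeq; subst hzeq
  rfl

end S7

/-- Double coset decomposition of `K^{(1)}_{m,n} · diag(ℓ⁴,ℓ²,ℓ²,1) · K^{(1)}_{m,n}` into
`ℓ⁸` pairwise distinct left cosets. -/
theorem stmt7 (p : ℕ) [Fact p.Prime] (m n : ℕ) (hn : 1 ≤ n) :
    (Kmn1 p m n *
        {Matrix.diagonal ![(p : ℚ_[p]) ^ 4, (p : ℚ_[p]) ^ 2, (p : ℚ_[p]) ^ 2, 1]} *
          Kmn1 p m n =
      ⋃ i : Fin (p ^ 2) × Fin (p ^ 2) × Fin (p ^ 4),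
        ({rep7 p i} : Set (Matrix (Fin 4) (Fin 4) ℚ_[p])) * Kmn1 p m n) ∧
    Function.Injective
      (fun i : Fin (p ^ 2) × Fin (p ^ 2) × Fin (p ^ 4) =>
        ({rep7 p i} : Set (Matrix (Fin 4) (Fin 4) ℚ_[p])) * Kmn1 p m n) := by
  have hD : (Matrix.diagonal ![(p : ℚ_[p]) ^ 4, (p : ℚ_[p]) ^ 2, (p : ℚ_[p]) ^ 2, 1])
      = S7.Dmat p := rfl
  constructor
  · ext s
    simp only [Set.mem_iUnion]
    constructor
    · intro hs
      rw [Set.mem_mul] at hs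
      obtain ⟨a, ha, b, hb, rfl⟩ := hs
      rw [Set.mem_mul] at ha
      obtain ⟨k1, hk1, d, hd, rfl⟩ := ha
      rw [Set.mem_singleton_iff] at hd
      subst hd
      rw [hD]
      obtain ⟨i, g, hg, heq⟩ := S7.exists_rep p hn hk1
      refine ⟨i, ?_⟩
      rw [Set.mem_mul]
      refine ⟨rep7 p i, Set.mem_singleton _, g * b, S7.mul_mem_K hg hb, ?_⟩
      rw [← Matrix.mul_assoc, ← heq]
    · rintro ⟨i, hsi⟩
      rw [Set.mem_mul] at hsi
      obtain ⟨r, hr, kk, hkk, rfl⟩ := hsi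
      rw [Set.mem_singleton_iff] at hr
      subst hr
      rw [S7.rep7_eq, hD]
      exact Set.mul_mem_mul (Set.mul_mem_mul
        (S7.Umat_mem m n (S7.norm_nat_le_one _) (S7.norm_nat_le_one _) (S7.norm_nat_le_one _))
        (Set.mem_singleton _)) hkk
  · intro i i' hfe
    simp only at hfe
    have hmem : rep7 p i ∈ ({rep7 p i} : Set (Matrix (Fin 4) (Fin 4) ℚ_[p])) * Kmn1 p m n := by
      rw [Set.mem_mul]
      exact ⟨rep7 p i, Set.mem_singleton _, 1, S7.one_mem_K m n, mul_one _⟩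
    rw [hfe, Set.mem_mul] at hmem
    obtain ⟨r, hr, kk, hkk, heq⟩ := hmem
    rw [Set.mem_singleton_iff] at hr
    subst hr
    exact S7.rep_inj p i i' hkk heq
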